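/- Let R be a commutative ring and let ũ : Id(R) → Id_k(fgId(R)) be the bijection I ↦ ⟨u_R(I)⟩_k with inverse Λ ↦ u_R⁻¹(Λ). Then ũ preserves primary ideals in both directions: an ideal q of R is primary if and only if ũ(q) is a primary subtractive ideal of fgId(R). In particular, an ideal p of R is prime if and only if ũ(p) is a prime subtractive ideal of fgId(R). -/

import Mathlib

/-- The type of finitely generated ideals of a commutative ring `R`. -/
def FGIdeal (R : Type*) [CommRing R] : Type _ := {I : Ideal R // I.FG}

namespace FGIdeal

variable {R : Type*} [CommRing R]

instance : Zero (FGIdeal R) := ⟨⟨⊥, Submodule.fg_bot⟩⟩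

instance : One (FGIdeal R) := ⟨⟨1, ⟨{1}, by simp [Ideal.one_eq_top]⟩⟩⟩

instance : Add (FGIdeal R) :=
  ⟨fun I J => ⟨I.1 + J.1, by rw [Submodule.add_eq_sup]; exact Submodule.FG.sup I.2 J.2⟩⟩

instance : Mul (FGIdeal R) := ⟨fun I J => ⟨I.1 * J.1, Submodule.FG.mul I.2 J.2⟩⟩

instance : SMul ℕ (FGIdeal R) :=
  ⟨fun n I => ⟨n • I.1, by
    induction n with
    | zero => simpa using! Submodule.fg_bot
    | succ n ih => rw [succ_nsmul, Submodule.add_eq_sup]; exact Submodule.FG.sup ih I.2⟩⟩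

instance : Pow (FGIdeal R) ℕ := ⟨fun I n => ⟨I.1 ^ n, Submodule.FG.pow I.2 n⟩⟩

instance : NatCast (FGIdeal R) :=
  ⟨fun n => ⟨(n : Ideal R), by
    induction n with
    | zero => simpa using! Submodule.fg_bot
    | succ n ih =>
        rw [Nat.cast_succ, Submodule.add_eq_sup]
        exact Submodule.FG.sup ih ⟨{1}, by simp [Ideal.one_eq_top]⟩⟩⟩

instance : CommSemiring (FGIdeal R) :=
  Subtype.val_injective.commSemiring (fun I : FGIdeal R => I.1) rfl rfl
    (fun _ _ => rfl) (fun _ _ => rfl) (fun _ _ => rfl) (fun _ _ => rfl) (fun _ => rfl)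

end FGIdeal

variable {R : Type*} [CommRing R]

/-- The universal integral seminorm `u_R : R → fgId(R)`, `a ↦ R·a`. -/
def uRfg (a : R) : FGIdeal R := ⟨Ideal.span {a}, Submodule.fg_span_singleton a⟩
section SemiringIdeals

variable {S : Type*} [CommSemiring S]

/-- A subset of a commutative semiring which is an ideal: it contains `0` and is closed
under addition and under multiplication by arbitrary elements. -/
def IsIdealSet (I : Set S) : Prop :=
  (0 : S) ∈ I ∧ (∀ a ∈ I, ∀ b ∈ I, a + b ∈ I) ∧ ∀ (c : S), ∀ a ∈ I, c * a ∈ I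

/-- A subset `I` is subtractive if `a + b ∈ I` and `a ∈ I` imply `b ∈ I`. -/
def IsSubtractiveSet (I : Set S) : Prop :=
  ∀ a b : S, a + b ∈ I → a ∈ I → b ∈ I

/-- A `k`-ideal (subtractive ideal) of a commutative semiring. -/
def IsKIdeal (I : Set S) : Prop := IsIdealSet I ∧ IsSubtractiveSet I

/-- The smallest subtractive ideal containing a subset `X`. -/
def kClosure (X : Set S) : Set S := ⋂₀ {J : Set S | IsKIdeal J ∧ X ⊆ J}

/-- The smallest ideal containing a subset `X`. -/
def idealGen (X : Set S) : Set S := ⋂₀ {J : Set S | IsIdealSet J ∧ X ⊆ J}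

/-- An ideal of a commutative semiring is prime when its complement is multiplicatively
closed: `1 ∉ I` and `a * b ∈ I` implies `a ∈ I` or `b ∈ I`. -/
def IsPrimeSet (I : Set S) : Prop :=
  (1 : S) ∉ I ∧ ∀ a b : S, a * b ∈ I → a ∈ I ∨ b ∈ I

end SemiringIdeals

/-- The map `Id(R) → Id_k(fgId(R))`, `I ↦ ⟨u_R(I)⟩_k`. -/
def uRtilde {R : Type*} [CommRing R] (I : Ideal R) : Set (FGIdeal R) :=
  kClosure (uRfg '' (I : Set R))

/-- An ideal of a commutative semiring (or ring) is primary if `a * b ∈ I` and `a ∉ I`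
imply `b ^ n ∈ I` for some integer `n ≥ 1`. -/
def IsPrimarySet {S : Type*} [CommSemiring S] (I : Set S) : Prop :=
  ∀ a b : S, a * b ∈ I → a ∉ I → ∃ n : ℕ, 1 ≤ n ∧ b ^ n ∈ I

section Aux
variable {R : Type*} [CommRing R]

lemma FGIdeal.val_add (I J : FGIdeal R) : (I + J).1 = I.1 ⊔ J.1 := Submodule.add_eq_sup ..
lemma FGIdeal.val_mul (I J : FGIdeal R) : (I * J).1 = I.1 * J.1 := rfl
lemma FGIdeal.val_pow (I : FGIdeal R) (n : ℕ) : (I ^ n).1 = I.1 ^ n := by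
  induction n with
  | zero => rfl
  | succ n ih => rw [pow_succ, pow_succ, ← ih]; rfl

lemma uRtilde_eq (q : Ideal R) : uRtilde q = {J : FGIdeal R | J.1 ≤ q} := by
  classical
  apply le_antisymm
  · apply Set.sInter_subset_of_mem
    refine ⟨⟨⟨?_, ?_, ?_⟩, ?_⟩, ?_⟩
    · show (0 : FGIdeal R).1 ≤ q
      exact bot_le
    · intro a ha b hb
      rw [Set.mem_setOf_eq, FGIdeal.val_add]; exact sup_le ha hb
    · intro c a ha
      rw [Set.mem_setOf_eq, FGIdeal.val_mul]
      exact le_trans Ideal.mul_le_right ha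
    · intro a b hab ha
      rw [Set.mem_setOf_eq, FGIdeal.val_add] at hab
      exact le_trans le_sup_right hab
    · rintro _ ⟨a, ha, rfl⟩
      exact (Submodule.span_singleton_le_iff_mem a q).mpr ha
  · intro J hJ T hT
    obtain ⟨⟨⟨h0, hadd, _⟩, _⟩, himg⟩ := hT
    obtain ⟨s, hs⟩ := J.2
    have key : ∀ s : Finset R, (↑s : Set R) ⊆ (q : Set R) →
        ∀ J : FGIdeal R, J.1 = Ideal.span ↑s → J ∈ T := by
      intro s
      induction s using Finset.induction_on with
      | empty =>
          intro _ J hJ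
          have : J = 0 := Subtype.ext (show J.1 = (0 : FGIdeal R).1 by
            rw [hJ, Finset.coe_empty, Ideal.span_empty]; rfl)
          rwa [this]
      | @insert a s ha ih =>
          intro hsub J hJ
          have haq : a ∈ q := hsub (by simp)
          have hs' : (↑s : Set R) ⊆ (q : Set R) := fun x hx => hsub (by simp [hx])
          set Js : FGIdeal R := ⟨Ideal.span ↑s, ⟨s, rfl⟩⟩
          have hJs : Js ∈ T := ih hs' Js rfl
          have hua : uRfg a ∈ T := himg ⟨a, haq, rfl⟩
          have : J = uRfg a + Js := by
            apply Subtype.ext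
            rw [hJ, FGIdeal.val_add, Finset.coe_insert, Ideal.span_insert]
            rfl
          rw [this]
          exact hadd _ hua _ hJs
    refine key s ?_ J hs.symm
    intro x hx
    have hJq : J.1 ≤ q := hJ
    rw [← hs] at hJq
    exact hJq (Ideal.subset_span hx)

lemma mem_uRtilde {q : Ideal R} {J : FGIdeal R} : J ∈ uRtilde q ↔ J.1 ≤ q := by
  rw [uRtilde_eq]; rfl

lemma uRfg_mem_uRtilde {q : Ideal R} {a : R} : uRfg a ∈ uRtilde q ↔ a ∈ q := by
  rw [mem_uRtilde]
  show Ideal.span {a} ≤ q ↔ a ∈ q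
  exact Submodule.span_singleton_le_iff_mem a q

end Aux

theorem uRtilde_preserves_primary_and_prime' (R : Type*) [CommRing R] :
    (∀ q : Ideal R, IsKIdeal (uRtilde q)) ∧
    (∀ q : Ideal R, IsPrimarySet (q : Set R) ↔ IsPrimarySet (uRtilde q)) ∧
    (∀ p : Ideal R, IsPrimeSet (p : Set R) ↔ IsPrimeSet (uRtilde p)) := by
  have hk : ∀ q : Ideal R, IsKIdeal (uRtilde q) := by
    intro q
    rw [uRtilde_eq]
    refine ⟨⟨?_, ?_, ?_⟩, ?_⟩
    · show (0 : FGIdeal R).1 ≤ q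
      exact bot_le
    · intro a ha b hb
      rw [Set.mem_setOf_eq, FGIdeal.val_add]; exact sup_le ha hb
    · intro c a ha
      rw [Set.mem_setOf_eq, FGIdeal.val_mul]
      exact le_trans Ideal.mul_le_right ha
    · intro a b hab _
      rw [Set.mem_setOf_eq, FGIdeal.val_add] at hab
      exact le_trans le_sup_right hab
  refine ⟨hk, ?_, ?_⟩
  · intro q
    constructor
    · intro hq A B hAB hA
      rw [mem_uRtilde, FGIdeal.val_mul] at hAB
      rw [mem_uRtilde] at hA
      obtain ⟨a, haA, haq⟩ := Set.not_subset.mp hA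
      have hrad : B.1 ≤ q.radical := by
        intro b hb
        obtain ⟨n, _, hn⟩ := hq a b (hAB (Ideal.mul_mem_mul haA hb)) haq
        exact ⟨n, hn⟩
      obtain ⟨n, hn⟩ := Ideal.exists_pow_le_of_le_radical_of_fg hrad B.2
      refine ⟨n + 1, Nat.le_add_left 1 n, ?_⟩
      rw [mem_uRtilde, FGIdeal.val_pow]
      exact le_trans (Ideal.pow_le_pow_right (Nat.le_succ n)) hn
    · intro hq a b hab ha
      have hmul : uRfg a * uRfg b ∈ uRtilde q := by
        rw [mem_uRtilde, FGIdeal.val_mul]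
        show Ideal.span {a} * Ideal.span {b} ≤ q
        rw [Ideal.span_singleton_mul_span_singleton]
        exact (Submodule.span_singleton_le_iff_mem _ _).mpr hab
      obtain ⟨n, hn1, hn⟩ := hq _ _ hmul (by rwa [uRfg_mem_uRtilde])
      rw [mem_uRtilde, FGIdeal.val_pow] at hn
      refine ⟨n, hn1, ?_⟩
      have : (Ideal.span {b} : Ideal R) ^ n ≤ q := hn
      rw [Ideal.span_singleton_pow] at this
      exact this (Ideal.mem_span_singleton_self _)
  · intro p
    constructor
    · intro hp
      constructor
      · intro h1
        rw [mem_uRtilde] at h1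
        exact hp.1 (h1 (show (1:R) ∈ (1:Ideal R) by rw [Ideal.one_eq_top]; trivial))
      · intro A B hAB
        rw [mem_uRtilde, FGIdeal.val_mul] at hAB
        by_cases hA : A.1 ≤ p
        · left; rwa [mem_uRtilde]
        · right
          rw [mem_uRtilde]
          obtain ⟨a, haA, hap⟩ := Set.not_subset.mp hA
          intro b hb
          rcases hp.2 a b (hAB (Ideal.mul_mem_mul haA hb)) with h | h
          · exact absurd h hap
          · exact h
    · intro hp
      constructor
      · intro h1
        apply hp.1
        rw [mem_uRtilde]
        show (1 : Ideal R) ≤ p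
        rw [Ideal.one_eq_top]
        intro x _
        have : x = x * 1 := (mul_one x).symm
        rw [this]
        exact Ideal.mul_mem_left p x h1
      · intro a b hab
        have hmul : uRfg a * uRfg b ∈ uRtilde p := by
          rw [mem_uRtilde, FGIdeal.val_mul]
          show Ideal.span {a} * Ideal.span {b} ≤ p
          rw [Ideal.span_singleton_mul_span_singleton]
          exact (Submodule.span_singleton_le_iff_mem _ _).mpr hab
        rcases hp.2 _ _ hmul with h | h
        · left; rwa [uRfg_mem_uRtilde] at h
        · right; rwa [uRfg_mem_uRtilde] at h

/-- The bijection `ũ : Id(R) → Id_k(fgId(R))`, `q ↦ ⟨u_R(q)⟩_k`,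
preserves primary ideals in both directions; in particular it preserves prime ideals in
both directions. -/
theorem uRtilde_preserves_primary_and_prime (R : Type*) [CommRing R] :
    (∀ q : Ideal R, IsKIdeal (uRtilde q)) ∧
    (∀ q : Ideal R, IsPrimarySet (q : Set R) ↔ IsPrimarySet (uRtilde q)) ∧
    (∀ p : Ideal R, IsPrimeSet (p : Set R) ↔ IsPrimeSet (uRtilde p)) := by
  exact uRtilde_preserves_primary_and_prime' R
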